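/- Let M be a Boolean n×n matrix and w a Boolean vector of dimension n. Define the graph database D over {a} with nodes {u_i, v_i : i ∈ [n]} ∪ {z}, edges u_i →ᵃ v_j whenever M[i,j] = 1, and edges v_j →ᵃ z whenever w[j] = 1. Let q = aa. Then q(D) = {(u_i, z) : (M·w)[i] = 1}, where M·w denotes the Boolean matrix-vector product. -/

import Mathlib

/-- Paths in a graph database, recording the label word. -/
inductive DBPath {V σ : Type*} (E : V → σ → V → Prop) : V → List σ → V → Prop
  | nil (u : V) : DBPath E u [] u
  | cons {u v w : V} {a : σ} {l : List σ} :
      E u a v → DBPath E v l w → DBPath E u (a :: l) w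

/-- RPQ evaluation. -/
def qEval {V σ : Type*} (E : V → σ → V → Prop) (L : List σ → Prop) (u v : V) : Prop :=
  ∃ w, L w ∧ DBPath E u w v

/-- Nodes of the matrix-vector graph database: `u_i`, `v_i` for `i ∈ [n]`, and `z`. -/
inductive MVNode (n : ℕ) : Type
  | u (i : Fin n)
  | v (i : Fin n)
  | z

/-- Edges of the matrix-vector graph database built from matrix `M` and vector `w`. -/
def mvEdge {n : ℕ} (M : Fin n → Fin n → Bool) (w : Fin n → Bool) :
    MVNode n → Unit → MVNode n → Prop := fun x _ y =>
  (∃ i j : Fin n, M i j = true ∧ x = MVNode.u i ∧ y = MVNode.v j) ∨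
  (∃ j : Fin n, w j = true ∧ x = MVNode.v j ∧ y = MVNode.z)

/-- With `q = aa`, `q(D) = {(u_i, z) : (M·w)[i] = 1}` (Boolean matrix-vector product). -/
theorem omv_reduction {n : ℕ} (M : Fin n → Fin n → Bool) (w : Fin n → Bool) :
    ∀ p r : MVNode n,
      qEval (mvEdge M w) (fun l => l = [(), ()]) p r ↔
        ∃ i : Fin n, p = MVNode.u i ∧ r = MVNode.z ∧ ∃ j, M i j = true ∧ w j = true := by
  intro p r
  constructor
  · rintro ⟨l, rfl, hp⟩
    rcases hp with _ | ⟨e1, hp⟩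
    rcases hp with _ | ⟨e2, hp⟩
    cases hp
    rcases e1 with ⟨i, j, hM, rfl, rfl⟩ | ⟨j, hw, rfl, h⟩
    · rcases e2 with ⟨i', j', _, h, _⟩ | ⟨j', hw, h, rfl⟩
      · exact absurd h (by simp)
      · cases h
        exact ⟨i, rfl, rfl, j, hM, hw⟩
    · subst h; rcases e2 with ⟨i', j', _, h, _⟩ | ⟨j', _, h, _⟩ <;> exact nomatch h
  · rintro ⟨i, rfl, rfl, j, hM, hw⟩
    exact ⟨[(), ()], rfl, .cons (Or.inl ⟨i, j, hM, rfl, rfl⟩)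
      (.cons (Or.inr ⟨j, hw, rfl, rfl⟩) (.nil _))⟩
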